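/- Let k ∈ ℤ and ℓ ∈ ℕ with 1 ≤ ℓ ≤ |k|, and let y ∈ ℝ with y ≠ 0. Then ∫_ℝ (1+ix)^{−ℓ+k} (1−ix)^{−ℓ−k} e^{−2πixy} dx = π^ℓ · |y|^{ℓ−1} · W_{|k|,ℓ−1/2}(4π|y|) / Γ(|k|+ℓ) if sgn(y) = sgn(k), and the integral equals 0 if sgn(y) = −sgn(k); in particular the integral converges absolutely. -/

import Mathlib

open MeasureTheory

/-- The classical Whittaker function `W_{K,L-1/2}` for integers `K ≥ L ≥ 1`. -/
noncomputable def Whol (K L : ℕ) (u : ℝ) : ℝ :=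
  (-1 : ℝ) ^ (K - L) * (K - L).factorial * (K + L - 1).factorial *
    ∑ m ∈ Finset.range (K - L + 1),
      (-1 : ℝ) ^ m / ((K - L - m).factorial * (2*L + m - 1).factorial * m.factorial) *
        u ^ (L + m) * Real.exp (-u / 2)

namespace Stmt7

open MeasureTheory Set Filter Complex
open scoped Real FourierTransform

lemma one_sub_ne (x : ℝ) : (1 - Complex.I * x) ≠ 0 := by
  intro h
  have := congrArg Complex.re h
  simp at this

lemma one_add_ne (x : ℝ) : (1 + Complex.I * x) ≠ 0 := by
  intro h
  have := congrArg Complex.re h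
  simp at this

lemma sq_norm_one_sub (x : ℝ) : ‖(1 - Complex.I * x)‖ ^ 2 = 1 + x ^ 2 := by
  rw [Complex.sq_norm, Complex.normSq_apply]
  simp
  ring

lemma sq_norm_one_add (x : ℝ) : ‖(1 + Complex.I * x)‖ ^ 2 = 1 + x ^ 2 := by
  rw [Complex.sq_norm, Complex.normSq_apply]
  simp
  ring

-- integrability of t^m e^{-ct} on (0,∞)
lemma integrableOn_pow_mul_exp {r : ℝ} (hr : 0 < r) (m : ℕ) :
    IntegrableOn (fun t : ℝ => t ^ m * Real.exp (-r * t)) (Ioi 0) := by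
  apply integrable_of_isBigO_exp_neg (half_pos hr)
  · fun_prop
  · have h1 : (fun t : ℝ => t ^ m) =o[atTop] fun t => Real.exp (r/2 * t) :=
      isLittleO_pow_exp_pos_mul_atTop m (half_pos hr)
    have h2 := h1.isBigO.mul (Asymptotics.isBigO_refl (fun t : ℝ => Real.exp (-r * t)) atTop)
    apply h2.trans
    apply Asymptotics.IsBigO.of_bound 1
    filter_upwards with t
    rw [← Real.exp_add]
    simp only [one_mul, Real.norm_eq_abs, Real.abs_exp]
    apply le_of_eq
    congr 1
    ring

lemma integrableOn_pow_mul_cexp {c : ℂ} (hc : 0 < c.re) (m : ℕ) :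
    IntegrableOn (fun t : ℝ => (t : ℂ) ^ m * Complex.exp (-c * t)) (Ioi 0) := by
  apply Integrable.mono' (integrableOn_pow_mul_exp hc m)
  · exact (Continuous.aestronglyMeasurable (by fun_prop)).restrict
  · filter_upwards [ae_restrict_mem measurableSet_Ioi] with t ht
    rw [norm_mul, norm_pow, Complex.norm_real, Real.norm_eq_abs, _root_.abs_of_nonneg (le_of_lt ht),
      Complex.norm_exp]
    have : (-c * t).re = -c.re * t := by simp
    rw [this]

lemma hasDerivAt_cexp_neg_mul (c : ℂ) (t : ℝ) :
    HasDerivAt (fun t : ℝ => Complex.exp (-c * t)) (-c * Complex.exp (-c * t)) t := by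
  have h : HasDerivAt (fun w : ℂ => Complex.exp (-c * w))
      (-c * Complex.exp (-c * (t:ℂ))) (t:ℂ) := by
    simpa [mul_comm] using ((hasDerivAt_id ((t:ℝ):ℂ)).const_mul (-c)).cexp
  exact h.comp_ofReal

lemma integral_pow_mul_cexp {c : ℂ} (hc : 0 < c.re) (m : ℕ) :
    ∫ t in Ioi (0:ℝ), (t : ℂ) ^ m * Complex.exp (-c * t) = m.factorial / c ^ (m + 1) := by
  have hc0 : c ≠ 0 := fun h => by simp [h] at hc
  induction m with
  | zero =>
      have hderiv : ∀ t : ℝ, HasDerivAt (fun t : ℝ => -c⁻¹ * Complex.exp (-c * t))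
          ((t:ℂ) ^ 0 * Complex.exp (-c * t)) t := by
        intro t
        have := (hasDerivAt_cexp_neg_mul c t).const_mul (-c⁻¹)
        convert this using 1
        · rfl
        rw [pow_zero, one_mul, ← mul_assoc, neg_mul_neg, inv_mul_cancel₀ hc0, one_mul]
      have htend : Tendsto (fun t : ℝ => -c⁻¹ * Complex.exp (-c * t)) atTop (nhds 0) := by
        rw [tendsto_zero_iff_norm_tendsto_zero]
        have heq : ∀ t : ℝ, ‖-c⁻¹ * Complex.exp (-c * t)‖ = ‖c⁻¹‖ * Real.exp (-c.re * t) := by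
          intro t
          rw [norm_mul, norm_neg, Complex.norm_exp]
          congr 2
          simp
        simp only [heq]
        rw [← mul_zero ‖c⁻¹‖]
        apply Tendsto.const_mul
        apply Real.tendsto_exp_atBot.comp
        exact tendsto_id.const_mul_atTop_of_neg (by simpa using hc)
      have := integral_Ioi_of_hasDerivAt_of_tendsto' (fun t _ => hderiv t)
        (integrableOn_pow_mul_cexp hc 0) htend
      rw [this]
      simp [hc0]
  | succ n ih =>
      have hderiv : ∀ t : ℝ, HasDerivAt (fun t : ℝ => (t:ℂ) ^ (n+1) * Complex.exp (-c * t))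
          ((((n:ℂ)+1) * (t:ℂ) ^ n) * Complex.exp (-c * t)
            + (t:ℂ) ^ (n+1) * (-c * Complex.exp (-c * t))) t := by
        intro t
        have h1 : HasDerivAt (fun t : ℝ => (t:ℂ) ^ (n+1)) (((n:ℂ)+1) * (t:ℂ) ^ n) t := by
          have := (hasDerivAt_pow (n+1) ((t:ℝ):ℂ)).comp_ofReal
          simpa using this
        exact h1.mul (hasDerivAt_cexp_neg_mul c t)
      have htend : Tendsto (fun t : ℝ => (t:ℂ) ^ (n+1) * Complex.exp (-c * t)) atTop (nhds 0) := by
        rw [tendsto_zero_iff_norm_tendsto_zero]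
        have heq : ∀ᶠ t : ℝ in atTop, ‖(t:ℂ) ^ (n+1) * Complex.exp (-c * t)‖
            = t ^ (n+1) * Real.exp (-c.re * t) := by
          filter_upwards [eventually_ge_atTop (0:ℝ)] with t ht
          rw [norm_mul, norm_pow, Complex.norm_real, Real.norm_eq_abs, _root_.abs_of_nonneg ht,
            Complex.norm_exp]
          congr 2
          simp
        rw [tendsto_congr' heq]
        have h1 := (isLittleO_pow_exp_pos_mul_atTop (n+1) hc).mul_isBigO
          (Asymptotics.isBigO_refl (fun t : ℝ => Real.exp (-c.re * t)) atTop)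
        have h2 : (fun t : ℝ => t ^ (n+1) * Real.exp (-c.re * t)) =o[atTop]
            (fun _ : ℝ => (1:ℝ)) := by
          refine h1.congr' (EventuallyEq.refl _ _) ?_
          filter_upwards with t
          rw [← Real.exp_add]
          simp
        exact (Asymptotics.isLittleO_one_iff ℝ).mp h2
      have hint1 : IntegrableOn (fun t : ℝ =>
          (((n:ℂ)+1) * (t:ℂ) ^ n) * Complex.exp (-c * t)) (Ioi 0) := by
        have := (integrableOn_pow_mul_cexp hc n).const_mul ((n:ℂ)+1)
        simpa [mul_assoc, IntegrableOn] using this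
      have hint2 : IntegrableOn (fun t : ℝ =>
          (t:ℂ) ^ (n+1) * (-c * Complex.exp (-c * t))) (Ioi 0) := by
        have := (integrableOn_pow_mul_cexp hc (n+1)).const_mul (-c)
        simpa [mul_left_comm, IntegrableOn] using this
      have hFTC := integral_Ioi_of_hasDerivAt_of_tendsto' (fun t _ => hderiv t)
        (hint1.add hint2) htend
      rw [integral_add hint1 hint2] at hFTC
      have e1 : ∫ t in Ioi (0:ℝ), (((n:ℂ)+1) * (t:ℂ) ^ n) * Complex.exp (-c * t)
          = ((n:ℂ)+1) * (n.factorial / c ^ (n+1)) := by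
        rw [← ih, ← integral_const_mul]
        congr 1 with t
        ring
      have e2 : ∫ t in Ioi (0:ℝ), (t:ℂ) ^ (n+1) * (-c * Complex.exp (-c * t))
          = -c * ∫ t in Ioi (0:ℝ), (t:ℂ) ^ (n+1) * Complex.exp (-c * t) := by
        rw [← integral_const_mul]
        congr 1 with t
        ring
      rw [e1, e2] at hFTC
      simp only [Complex.ofReal_zero, zero_pow (Nat.succ_ne_zero n), zero_mul, sub_zero] at hFTC
      have hcp : c ^ (n+1+1) ≠ 0 := pow_ne_zero _ hc0
      rw [Nat.factorial_succ, eq_div_iff hcp]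
      push_cast
      simp only [neg_mul] at hFTC ⊢
      field_simp at hFTC
      linear_combination -hFTC
lemma twopi_pos : (0:ℝ) < 2 * Real.pi := by positivity

lemma norm_one_sub_eq (x : ℝ) : ‖(1 - Complex.I * x)‖ = ‖(1 + Complex.I * x)‖ := by
  have h1 := sq_norm_one_sub x
  have h2 := sq_norm_one_add x
  nlinarith [norm_nonneg (1 - Complex.I * (x:ℂ)), norm_nonneg (1 + Complex.I * (x:ℂ))]

lemma one_le_norm_one_add (x : ℝ) : (1:ℝ) ≤ ‖(1 + Complex.I * x)‖ := by
  nlinarith [sq_norm_one_add x, norm_nonneg (1 + Complex.I * (x:ℂ)), sq_nonneg x]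

lemma integrable_aux {f : ℝ → ℂ} (C : ℝ) (hmeas : AEStronglyMeasurable f volume)
    (hbound : ∀ x : ℝ, ‖f x‖ ≤ C * (1 + x^2)⁻¹) : Integrable f :=
  (integrable_inv_one_add_sq.const_mul C).mono' hmeas (Filter.Eventually.of_forall hbound)

lemma inv_pow_norm_le {n : ℕ} (hn : 2 ≤ n) (x : ℝ) :
    (‖(1 + Complex.I * x)‖ ^ n)⁻¹ ≤ (1 + x^2)⁻¹ := by
  have hs1 := one_le_norm_one_add x
  have key : 1 + x^2 ≤ ‖(1 + Complex.I * x)‖ ^ n := by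
    calc 1 + x^2 = ‖(1 + Complex.I * x)‖ ^ 2 := (sq_norm_one_add x).symm
    _ ≤ ‖(1 + Complex.I * x)‖ ^ n := pow_le_pow_right₀ hs1 hn
  exact inv_anti₀ (by positivity) key

noncomputable def gfun (m : ℕ) : ℝ → ℂ :=
  Set.indicator (Ioi 0) (fun t => (t:ℂ) ^ m * Complex.exp (-((2*Real.pi : ℝ):ℂ) * t))

lemma gfun_integrable (m : ℕ) : Integrable (gfun m) := by
  rw [gfun, integrable_indicator_iff measurableSet_Ioi]
  exact integrableOn_pow_mul_cexp (by simpa using twopi_pos) m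

lemma fourier_gfun (m : ℕ) (x : ℝ) :
    (𝓕 (gfun m)) x = m.factorial / (((2*Real.pi:ℝ):ℂ) * (1 + Complex.I*x)) ^ (m+1) := by
  rw [Real.fourier_real_eq_integral_exp_smul]
  have heq : (fun v : ℝ => Complex.exp (↑(-2 * Real.pi * v * x) * Complex.I) • gfun m v)
      = Set.indicator (Ioi 0) (fun v : ℝ => (v:ℂ) ^ m *
          Complex.exp (-(((2*Real.pi:ℝ):ℂ) * (1 + Complex.I*x)) * v)) := by
    funext v
    rw [gfun, Set.indicator_apply, Set.indicator_apply]
    by_cases hv : v ∈ Ioi (0:ℝ)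
    · simp only [hv, if_true, smul_eq_mul]
      rw [mul_comm, mul_assoc, ← Complex.exp_add]
      congr 2
      push_cast
      ring
    · simp [hv]
  rw [heq, integral_indicator measurableSet_Ioi]
  have hre : (0:ℝ) < ((((2*Real.pi:ℝ):ℂ) * (1 + Complex.I*x))).re := by
    rw [Complex.re_ofReal_mul]
    have h1 : (1 + Complex.I * (x:ℂ)).re = 1 := by simp
    rw [h1, mul_one]
    exact twopi_pos
  exact integral_pow_mul_cexp hre m

lemma gfun_cont {m : ℕ} (hm : 1 ≤ m) : Continuous (gfun m) := by
  have heq : gfun m = fun t : ℝ =>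
      (((max t 0 : ℝ)):ℂ) ^ m * Complex.exp (-((2*Real.pi:ℝ):ℂ) * ((max t 0 : ℝ):ℂ)) := by
    funext t
    rw [gfun, Set.indicator_apply]
    by_cases ht : t ∈ Ioi (0:ℝ)
    · rw [if_pos ht, max_eq_left (le_of_lt ht)]
    · rw [if_neg ht, max_eq_right (not_lt.mp ht)]
      rw [Complex.ofReal_zero, zero_pow (by omega : m ≠ 0), zero_mul]
  rw [heq]
  fun_prop

lemma integrable_fourier_gfun {m : ℕ} (hm : 1 ≤ m) : Integrable (𝓕 (gfun m)) := by
  apply integrable_aux ((m.factorial : ℝ))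
  · apply Continuous.aestronglyMeasurable
    have : (𝓕 (gfun m)) = fun x : ℝ =>
        (m.factorial : ℂ) / (((2*Real.pi:ℝ):ℂ) * (1 + Complex.I*x)) ^ (m+1) := by
      funext x; exact fourier_gfun m x
    rw [this]
    apply Continuous.div continuous_const (by fun_prop)
    intro x
    apply pow_ne_zero
    apply mul_ne_zero
    · simpa using Real.pi_ne_zero
    · exact one_add_ne x
  · intro x
    rw [fourier_gfun m x, norm_div, norm_pow, norm_mul, Complex.norm_real, Real.norm_eq_abs,
      _root_.abs_of_pos twopi_pos, div_eq_mul_inv]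
    have h2 : ‖((m.factorial : ℕ) : ℂ)‖ = (m.factorial : ℝ) := by simp
    rw [h2]
    apply mul_le_mul_of_nonneg_left _ (by positivity)
    apply inv_anti₀ (by positivity)
    have hs1 := one_le_norm_one_add x
    calc 1 + x^2 = ‖(1 + Complex.I * x)‖ ^ 2 := (sq_norm_one_add x).symm
    _ ≤ ‖(1 + Complex.I * x)‖ ^ (m+1) := pow_le_pow_right₀ hs1 (by omega)
    _ ≤ (2 * Real.pi * ‖(1 + Complex.I * x)‖) ^ (m+1) := by
        apply pow_le_pow_left₀ (norm_nonneg _)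
        apply le_mul_of_one_le_left (norm_nonneg _)
        nlinarith [Real.pi_gt_three]

lemma integral_comp_neg' {E : Type*} [NormedAddCommGroup E] [NormedSpace ℝ E] (f : ℝ → E) :
    ∫ x : ℝ, f (-x) = ∫ x : ℝ, f x := by
  have A : MeasurableEmbedding fun x : ℝ => -x :=
    (Homeomorph.neg ℝ).isClosedEmbedding.measurableEmbedding
  have := A.integral_map (μ := (volume : Measure ℝ)) (g := f)
  rw [Measure.map_neg_eq_self (volume : Measure ℝ)] at this
  exact this.symm

lemma norm_cexp_factor (x y : ℝ) :
    ‖Complex.exp (-(2 * (Real.pi:ℂ)) * Complex.I * x * y)‖ = 1 := by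
  rw [Complex.norm_exp]
  have : (-(2 * (Real.pi:ℂ)) * Complex.I * x * y).re = 0 := by
    simp [Complex.mul_re, Complex.mul_im]
  rw [this, Real.exp_zero]

lemma integrable_one_sub {n : ℕ} (hn : 2 ≤ n) (y : ℝ) :
    Integrable (fun x : ℝ => ((1 - Complex.I * x) ^ n)⁻¹ *
      Complex.exp (-(2 * (Real.pi:ℂ)) * Complex.I * x * y)) := by
  apply integrable_aux 1
  · apply Continuous.aestronglyMeasurable
    apply Continuous.mul
    · exact Continuous.inv₀ (by fun_prop) (fun x => pow_ne_zero _ (one_sub_ne x))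
    · fun_prop
  · intro x
    rw [norm_mul, norm_cexp_factor, mul_one, norm_inv, norm_pow, norm_one_sub_eq, one_mul]
    exact inv_pow_norm_le hn x

lemma FT_one_sub {n : ℕ} (hn : 2 ≤ n) (y : ℝ) :
    (∫ x : ℝ, ((1 - Complex.I * x) ^ n)⁻¹ *
        Complex.exp (-(2 * (Real.pi:ℂ)) * Complex.I * x * y))
      = if 0 < y then (((2*Real.pi) ^ n * y ^ (n-1) * Real.exp (-(2*Real.pi*y))
          / (n-1).factorial : ℝ) : ℂ) else 0 := by
  obtain ⟨m, rfl⟩ : ∃ m, n = m + 1 := ⟨n - 1, by omega⟩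
  have hm : 1 ≤ m := by omega
  have hinv := (gfun_integrable m).fourierInv_fourier_eq (integrable_fourier_gfun hm)
      ((gfun_cont hm).continuousAt (x := y))
  rw [Real.fourierInv_eq_fourier_neg,
    Real.fourier_real_eq_integral_exp_smul] at hinv
  set F : ℝ → ℂ := fun v => Complex.exp (↑(-2 * Real.pi * v * -y) * Complex.I) • (𝓕 (gfun m)) v
    with hF
  -- hinv : ∫ v, F v = gfun m y
  have key : (fun x : ℝ => ((1 - Complex.I * x) ^ (m+1))⁻¹ *
      Complex.exp (-(2 * (Real.pi:ℂ)) * Complex.I * x * y))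
      = fun x : ℝ => (((2*Real.pi:ℝ):ℂ) ^ (m+1) / m.factorial) * F (-x) := by
    funext x
    rw [hF]
    simp only [smul_eq_mul, fourier_gfun m (-x)]
    rw [mul_pow]
    have hfac : ((m.factorial : ℕ) : ℂ) ≠ 0 := by
      exact_mod_cast Nat.cast_ne_zero.mpr m.factorial_ne_zero
    have hpow : (((2*Real.pi:ℝ):ℂ)) ^ (m+1) ≠ 0 := by
      apply pow_ne_zero
      simpa using Real.pi_ne_zero
    have harg : (↑(-2 * Real.pi * (-x) * -y) * Complex.I)
        = -(2 * (Real.pi:ℂ)) * Complex.I * x * y := by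
      push_cast
      ring
    rw [harg]
    have hIx : ((1 + Complex.I * ((-x : ℝ):ℂ)) ^ (m+1)) = (1 - Complex.I * x) ^ (m+1) := by
      push_cast
      ring_nf
    rw [hIx]
    have hne : ((1 : ℂ) - Complex.I * x) ^ (m+1) ≠ 0 := pow_ne_zero _ (one_sub_ne x)
    have gen : ∀ (C D P E : ℂ), C ≠ 0 → D ≠ 0 → P ≠ 0 →
        P⁻¹ * E = C / D * (E * (D / (C * P))) := by
      intro C D P E hC hD hP
      field_simp
    exact gen _ _ _ _ hpow hfac hne
  rw [key, integral_const_mul, integral_comp_neg' F, hinv]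
  rw [gfun, Set.indicator_apply]
  by_cases hy : y ∈ Ioi (0:ℝ)
  · rw [if_pos hy, if_pos (by exact hy)]
    have harg2 : -((2*Real.pi:ℝ):ℂ) * ((y:ℝ):ℂ) = ((-(2*Real.pi*y) : ℝ) : ℂ) := by
      push_cast
      ring
    rw [harg2, ← Complex.ofReal_exp]
    have hfac : ((m.factorial : ℕ) : ℂ) ≠ 0 := by
      exact_mod_cast Nat.cast_ne_zero.mpr m.factorial_ne_zero
    rw [Nat.add_sub_cancel]
    push_cast
    field_simp
  · rw [if_neg hy, if_neg (by exact hy), mul_zero]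

lemma norm_main_le {a b : ℕ} (hab : a + 2 ≤ b) (x : ℝ) :
    ‖(1 + Complex.I * x) ^ a * ((1 - Complex.I * x) ^ b)⁻¹‖ ≤ (1 + x^2)⁻¹ := by
  rw [norm_mul, norm_inv, norm_pow, norm_pow, norm_one_sub_eq]
  have hs1 := one_le_norm_one_add x
  have hs0 : (0:ℝ) < ‖(1 + Complex.I * x)‖ := by linarith
  have h1 : ‖(1 + Complex.I * x)‖ ^ a * (‖(1 + Complex.I * x)‖ ^ b)⁻¹
      ≤ ‖(1 + Complex.I * x)‖ ^ a * (‖(1 + Complex.I * x)‖ ^ (a+2))⁻¹ := by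
    apply mul_le_mul_of_nonneg_left _ (by positivity)
    exact inv_anti₀ (by positivity) (pow_le_pow_right₀ hs1 hab)
  have h2 : ‖(1 + Complex.I * x)‖ ^ a * (‖(1 + Complex.I * x)‖ ^ (a+2))⁻¹
      = (‖(1 + Complex.I * x)‖ ^ 2)⁻¹ := by
    rw [pow_add, mul_inv, ← mul_assoc, mul_inv_cancel₀ (by positivity), one_mul]
  rw [h2, sq_norm_one_add] at h1
  exact h1

lemma main_integrable (l a : ℕ) (hl : 1 ≤ l) (y : ℝ) :
    Integrable (fun x : ℝ => (1 + Complex.I * x) ^ a * ((1 - Complex.I * x) ^ (2*l + a))⁻¹ *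
      Complex.exp (-(2 * (Real.pi:ℂ)) * Complex.I * x * y)) := by
  apply integrable_aux 1
  · apply Continuous.aestronglyMeasurable
    apply Continuous.mul
    apply Continuous.mul (by fun_prop)
    · exact Continuous.inv₀ (by fun_prop) (fun x => pow_ne_zero _ (one_sub_ne x))
    · fun_prop
  · intro x
    rw [norm_mul, norm_cexp_factor, mul_one, one_mul]
    exact norm_main_le (by omega) x

lemma real_id (l a : ℕ) (hl : 1 ≤ l) {y : ℝ} (hy : 0 < y) :
    ∑ j ∈ Finset.range (a+1), (a.choose j : ℝ) * 2^j * (-1:ℝ)^(a-j) *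
      ((2*Real.pi)^(2*l+j) * y^(2*l+j-1) * Real.exp (-(2*Real.pi*y)) / (2*l+j-1).factorial)
    = Real.pi ^ l * |y| ^ (l - 1) * Whol (l + a) l (4 * Real.pi * |y|) /
        Real.Gamma (((l + a : ℕ) : ℝ) + l) := by
  rw [abs_of_pos hy, Whol]
  have e1 : l + a - l = a := by omega
  rw [e1]
  have hGamma : Real.Gamma (((l + a : ℕ) : ℝ) + l) = (l + a + l - 1).factorial := by
    have h1 : ((l + a : ℕ) : ℝ) + l = ((l + a + l - 1 : ℕ) : ℝ) + 1 := by
      rw [Nat.cast_sub (show 1 ≤ l + a + l by omega)]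
      push_cast
      ring
    rw [h1, Real.Gamma_nat_eq_factorial]
  rw [hGamma]
  rw [Finset.mul_sum, Finset.mul_sum, Finset.sum_div]
  apply Finset.sum_congr rfl
  intro m hm
  rw [Finset.mem_range] at hm
  obtain ⟨b, rfl⟩ : ∃ b, l = b + 1 := ⟨l - 1, by omega⟩
  obtain ⟨c, rfl⟩ : ∃ c, a = m + c := ⟨a - m, by omega⟩
  rw [show m + c - m = c from by omega]
  rw [show 2*(b+1) + m - 1 = 2*b + m + 1 from by omega]
  rw [show b + 1 - 1 = b from by omega]
  rw [show (b+1) + (m+c) + (b+1) - 1 = 2*b + m + c + 1 from by omega]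
  rw [show 2*(b+1) + m = 2*b + m + 2 from by omega]
  rw [Nat.cast_choose ℝ (show m ≤ m + c by omega)]
  rw [show m + c - m = c from by omega]
  rw [show -(4 * Real.pi * y) / 2 = -(2 * Real.pi * y) from by ring]
  have f1 : ((m.factorial : ℕ) : ℝ) ≠ 0 := Nat.cast_ne_zero.mpr m.factorial_ne_zero
  have f2 : ((c.factorial : ℕ) : ℝ) ≠ 0 := Nat.cast_ne_zero.mpr c.factorial_ne_zero
  have f3 : (((2*b+m+1).factorial : ℕ) : ℝ) ≠ 0 :=
    Nat.cast_ne_zero.mpr (2*b+m+1).factorial_ne_zero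
  have f4 : (((2*b+m+c+1).factorial : ℕ) : ℝ) ≠ 0 :=
    Nat.cast_ne_zero.mpr (2*b+m+c+1).factorial_ne_zero
  have hsign : (-1:ℝ)^(m+c) * (-1:ℝ)^m = (-1:ℝ)^c := by
    rw [← pow_add]
    rw [show m + c + m = 2*m + c from by omega]
    rw [pow_add, pow_mul]
    norm_num
  field_simp
  rw [← hsign]
  ring_nf
  rw [show (4:ℝ)^m = 2^(m*2) from by rw [mul_comm, pow_mul]; norm_num,
      show (4:ℝ)^b = 2^(b*2) from by rw [mul_comm, pow_mul]; norm_num,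
      show (-1:ℝ)^(m*2) = 1 from by rw [mul_comm, pow_mul]; norm_num]

lemma main_integral (l a : ℕ) (hl : 1 ≤ l) (y : ℝ) :
    (∫ x : ℝ, (1 + Complex.I * x) ^ a * ((1 - Complex.I * x) ^ (2*l + a))⁻¹ *
        Complex.exp (-(2 * (Real.pi:ℂ)) * Complex.I * x * y))
      = if 0 < y then ((Real.pi ^ l * |y| ^ (l - 1) * Whol (l + a) l (4 * Real.pi * |y|) /
          Real.Gamma (((l + a : ℕ) : ℝ) + l) : ℝ) : ℂ) else 0 := by
  have expand : ∀ x : ℝ, (1 + Complex.I * x) ^ a * ((1 - Complex.I * x) ^ (2*l + a))⁻¹ *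
      Complex.exp (-(2 * (Real.pi:ℂ)) * Complex.I * x * y)
      = ∑ j ∈ Finset.range (a + 1),
          (((a.choose j : ℕ) : ℂ) * 2^j * (-1:ℂ)^(a-j)) *
            (((1 - Complex.I * x) ^ (2*l + j))⁻¹ *
              Complex.exp (-(2 * (Real.pi:ℂ)) * Complex.I * x * y)) := by
    intro x
    have h1 : (1 + Complex.I * (x:ℂ)) = 2 + (-(1 - Complex.I * x)) := by ring
    rw [h1, add_pow, Finset.sum_mul, Finset.sum_mul]
    apply Finset.sum_congr rfl
    intro j hj
    rw [Finset.mem_range] at hj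
    have hsplit : (2*l + a : ℕ) = (a - j) + (2*l + j) := by omega
    rw [hsplit, pow_add, mul_inv, neg_pow]
    have hcan : (1 - Complex.I * (x:ℂ))^(a-j) * ((1 - Complex.I * (x:ℂ))^(a-j))⁻¹ = 1 :=
      mul_inv_cancel₀ (pow_ne_zero _ (one_sub_ne x))
    have gen : ∀ (p q ch inv2 E zpow : ℂ), zpow * zpow⁻¹ = 1 →
        p * (q * zpow) * ch * (zpow⁻¹ * inv2) * E = ch * p * q * (inv2 * E) := by
      intro p q ch inv2 E zpow h
      calc p * (q * zpow) * ch * (zpow⁻¹ * inv2) * E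
          = ch * p * q * (inv2 * E) * (zpow * zpow⁻¹) := by ring
        _ = ch * p * q * (inv2 * E) := by rw [h, mul_one]
    exact gen _ _ _ _ _ _ hcan
  have hterm : ∀ j ∈ Finset.range (a+1), Integrable (fun x : ℝ =>
      (((a.choose j : ℕ) : ℂ) * 2^j * (-1:ℂ)^(a-j)) *
        (((1 - Complex.I * x) ^ (2*l + j))⁻¹ *
          Complex.exp (-(2 * (Real.pi:ℂ)) * Complex.I * x * y))) :=
    fun j _ => (integrable_one_sub (by omega) y).const_mul _
  have step1 : (∫ x : ℝ, (1 + Complex.I * x) ^ a * ((1 - Complex.I * x) ^ (2*l + a))⁻¹ *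
      Complex.exp (-(2 * (Real.pi:ℂ)) * Complex.I * x * y))
      = ∑ j ∈ Finset.range (a + 1),
          (((a.choose j : ℕ) : ℂ) * 2^j * (-1:ℂ)^(a-j)) *
            (∫ x : ℝ, ((1 - Complex.I * x) ^ (2*l + j))⁻¹ *
              Complex.exp (-(2 * (Real.pi:ℂ)) * Complex.I * x * y)) := by
    rw [show (fun x : ℝ => (1 + Complex.I * x) ^ a * ((1 - Complex.I * x) ^ (2*l + a))⁻¹ *
        Complex.exp (-(2 * (Real.pi:ℂ)) * Complex.I * x * y))
      = fun x : ℝ => ∑ j ∈ Finset.range (a + 1),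
          (((a.choose j : ℕ) : ℂ) * 2^j * (-1:ℂ)^(a-j)) *
            (((1 - Complex.I * x) ^ (2*l + j))⁻¹ *
              Complex.exp (-(2 * (Real.pi:ℂ)) * Complex.I * x * y)) from funext expand]
    rw [integral_finset_sum _ hterm]
    exact Finset.sum_congr rfl (fun j _ => integral_const_mul _ _)
  rw [step1]
  have step2 : ∀ j ∈ Finset.range (a+1),
      (((a.choose j : ℕ) : ℂ) * 2^j * (-1:ℂ)^(a-j)) *
        (∫ x : ℝ, ((1 - Complex.I * x) ^ (2*l + j))⁻¹ *
          Complex.exp (-(2 * (Real.pi:ℂ)) * Complex.I * x * y))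
      = (((a.choose j : ℕ) : ℂ) * 2^j * (-1:ℂ)^(a-j)) *
        (if 0 < y then (((2*Real.pi) ^ (2*l+j) * y ^ (2*l+j-1) *
            Real.exp (-(2*Real.pi*y)) / (2*l+j-1).factorial : ℝ) : ℂ) else 0) := by
    intro j hj
    rw [FT_one_sub (by omega) y]
  rw [Finset.sum_congr rfl step2]
  by_cases hy : 0 < y
  · simp only [if_pos hy]
    rw [← real_id l a hl hy]
    push_cast
    exact Finset.sum_congr rfl (fun j hj => by ring)
  · simp [if_neg hy]

lemma integrable_comp_neg {f : ℝ → ℂ} (hf : Integrable f) : Integrable (fun x : ℝ => f (-x)) := by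
  have A : MeasurableEmbedding fun x : ℝ => -x :=
    (Homeomorph.neg ℝ).isClosedEmbedding.measurableEmbedding
  rw [← Measure.map_neg_eq_self (volume : Measure ℝ)] at hf
  exact A.integrable_map_iff.mp hf

lemma sign_pos_of {y : ℝ} (hy : y ≠ 0) (h : Real.sign y = 1) : 0 < y := by
  rcases lt_trichotomy y 0 with h'|h'|h'
  · rw [Real.sign_of_neg h'] at h; norm_num at h
  · exact absurd h' hy
  · exact h'

lemma sign_neg_of {y : ℝ} (hy : y ≠ 0) (h : Real.sign y = -1) : y < 0 := by
  rcases lt_trichotomy y 0 with h'|h'|h'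
  · exact h'
  · exact absurd h' hy
  · rw [Real.sign_of_pos h'] at h; norm_num at h

end Stmt7

open Stmt7

/-- (Fourier transform identity from \cite[3.384.9]{GR15}.) For `k ∈ ℤ`,
`1 ≤ ℓ ≤ |k|`, and `y ≠ 0`, the integral
`∫_ℝ (1+ix)^{-ℓ+k} (1-ix)^{-ℓ-k} e^{-2πixy} dx` converges absolutely; it equals
`π^ℓ |y|^{ℓ-1} W_{|k|,ℓ-1/2}(4π|y|) / Γ(|k|+ℓ)` if `sgn(y) = sgn(k)`, and `0` if
`sgn(y) = -sgn(k)`. -/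
theorem stmt7 (k : ℤ) (l : ℕ) (hl : 1 ≤ l) (hlk : (l : ℤ) ≤ |k|) (y : ℝ) (hy : y ≠ 0) :
    Integrable (fun x : ℝ =>
        (1 + Complex.I * x) ^ (-(l : ℂ) + (k : ℂ)) *
          (1 - Complex.I * x) ^ (-(l : ℂ) - (k : ℂ)) *
          Complex.exp (-(2 * Real.pi) * Complex.I * x * y)) ∧
    (Real.sign y = (Int.sign k : ℝ) →
      (∫ x : ℝ,
          (1 + Complex.I * x) ^ (-(l : ℂ) + (k : ℂ)) *
            (1 - Complex.I * x) ^ (-(l : ℂ) - (k : ℂ)) *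
            Complex.exp (-(2 * Real.pi) * Complex.I * x * y)) =
        ((Real.pi ^ l * |y| ^ (l - 1) * Whol k.natAbs l (4 * Real.pi * |y|) /
            Real.Gamma ((k.natAbs : ℝ) + l) : ℝ) : ℂ)) ∧
    (Real.sign y = -(Int.sign k : ℝ) →
      (∫ x : ℝ,
          (1 + Complex.I * x) ^ (-(l : ℂ) + (k : ℂ)) *
            (1 - Complex.I * x) ^ (-(l : ℂ) - (k : ℂ)) *
            Complex.exp (-(2 * Real.pi) * Complex.I * x * y)) = 0) := by
  have hk0 : k ≠ 0 := by
    intro h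
    rw [h] at hlk
    simp at hlk
    omega
  have hlK : l ≤ k.natAbs := by
    have h1 : (l:ℤ) ≤ (k.natAbs : ℤ) := by
      rwa [Int.abs_eq_natAbs] at hlk
    exact_mod_cast h1
  obtain ⟨a, hKa⟩ : ∃ a, k.natAbs = l + a := ⟨k.natAbs - l, by omega⟩
  rcases lt_or_gt_of_ne hk0 with hkneg | hkpos
  · -- k < 0
    have hkZ : k = -((l:ℤ) + (a:ℤ)) := by omega
    have hkC : (k:ℂ) = -(((l:ℕ):ℂ) + ((a:ℕ):ℂ)) := by
      exact_mod_cast congrArg (Int.cast : ℤ → ℂ) hkZ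
    have hfun : (fun x : ℝ =>
        (1 + Complex.I * x) ^ (-(l : ℂ) + (k : ℂ)) *
          (1 - Complex.I * x) ^ (-(l : ℂ) - (k : ℂ)) *
          Complex.exp (-(2 * Real.pi) * Complex.I * x * y))
        = (fun x : ℝ => (1 + Complex.I * (-x:ℝ)) ^ a *
            ((1 - Complex.I * (-x:ℝ)) ^ (2*l + a))⁻¹ *
            Complex.exp (-(2 * (Real.pi:ℂ)) * Complex.I * (-x:ℝ) * ((-y:ℝ):ℂ))) := by
      funext x
      have e1 : (-(l : ℂ) + (k : ℂ)) = -(((2*l + a : ℕ)):ℂ) := by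
        rw [hkC]; push_cast; ring
      have e2 : (-(l : ℂ) - (k : ℂ)) = ((a : ℕ) : ℂ) := by
        rw [hkC]; push_cast; ring
      rw [e1, e2, Complex.cpow_neg, Complex.cpow_natCast, Complex.cpow_natCast]
      have h3 : (1 + Complex.I * ((-x:ℝ):ℂ)) = 1 - Complex.I * x := by push_cast; ring
      have h4 : (1 - Complex.I * ((-x:ℝ):ℂ)) = 1 + Complex.I * x := by push_cast; ring
      have h5 : -(2 * (Real.pi:ℂ)) * Complex.I * ((-x:ℝ):ℂ) * ((-y:ℝ):ℂ)
          = -(2 * (Real.pi:ℂ)) * Complex.I * x * y := by push_cast; ring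
      rw [h3, h4, h5]
      ring
    refine ⟨?_, ?_, ?_⟩
    · rw [hfun]
      exact integrable_comp_neg (main_integrable l a hl (-y))
    · intro hsgn
      have hsk : Int.sign k = -1 := Int.sign_eq_neg_one_of_neg hkneg
      have hy' : y < 0 := sign_neg_of hy (by rw [hsgn, hsk]; norm_num)
      rw [hfun]
      rw [integral_comp_neg' (fun x : ℝ => (1 + Complex.I * (x:ℝ)) ^ a *
            ((1 - Complex.I * (x:ℝ)) ^ (2*l + a))⁻¹ *
            Complex.exp (-(2 * (Real.pi:ℂ)) * Complex.I * (x:ℝ) * ((-y:ℝ):ℂ)))]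
      rw [main_integral l a hl (-y), if_pos (by linarith), abs_neg, hKa]
    · intro hsgn
      have hsk : Int.sign k = -1 := Int.sign_eq_neg_one_of_neg hkneg
      have hy' : 0 < y := sign_pos_of hy (by rw [hsgn, hsk]; norm_num)
      rw [hfun]
      rw [integral_comp_neg' (fun x : ℝ => (1 + Complex.I * (x:ℝ)) ^ a *
            ((1 - Complex.I * (x:ℝ)) ^ (2*l + a))⁻¹ *
            Complex.exp (-(2 * (Real.pi:ℂ)) * Complex.I * (x:ℝ) * ((-y:ℝ):ℂ)))]
      rw [main_integral l a hl (-y), if_neg (by linarith)]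
  · -- k > 0
    have hkZ : k = (l:ℤ) + (a:ℤ) := by omega
    have hkC : (k:ℂ) = ((l:ℕ):ℂ) + ((a:ℕ):ℂ) := by
      exact_mod_cast congrArg (Int.cast : ℤ → ℂ) hkZ
    have hfun : (fun x : ℝ =>
        (1 + Complex.I * x) ^ (-(l : ℂ) + (k : ℂ)) *
          (1 - Complex.I * x) ^ (-(l : ℂ) - (k : ℂ)) *
          Complex.exp (-(2 * Real.pi) * Complex.I * x * y))
        = (fun x : ℝ => (1 + Complex.I * x) ^ a * ((1 - Complex.I * x) ^ (2*l + a))⁻¹ *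
            Complex.exp (-(2 * (Real.pi:ℂ)) * Complex.I * x * y)) := by
      funext x
      have e1 : (-(l : ℂ) + (k : ℂ)) = ((a : ℕ) : ℂ) := by
        rw [hkC]; ring
      have e2 : (-(l : ℂ) - (k : ℂ)) = -(((2*l + a : ℕ)):ℂ) := by
        rw [hkC]; push_cast; ring
      rw [e1, e2, Complex.cpow_neg, Complex.cpow_natCast, Complex.cpow_natCast]
    refine ⟨?_, ?_, ?_⟩
    · rw [hfun]
      exact main_integrable l a hl y
    · intro hsgn
      have hsk : Int.sign k = 1 := Int.sign_eq_one_of_pos hkpos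
      have hy' : 0 < y := sign_pos_of hy (by rw [hsgn, hsk]; norm_num)
      rw [hfun, main_integral l a hl y, if_pos hy', hKa]
    · intro hsgn
      have hsk : Int.sign k = 1 := Int.sign_eq_one_of_pos hkpos
      have hy' : y < 0 := sign_neg_of hy (by rw [hsgn, hsk]; norm_num)
      rw [hfun, main_integral l a hl y, if_neg (by linarith)]
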